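/- Let M ∈ ℝ^{n×p} and N ∈ ℝ^{n×k}, and suppose MᵀN has singular value decomposition UDVᵀ with U ∈ ℝ^{p×k}, V ∈ ℝ^{k×k} having orthonormal columns and D diagonal with nonnegative entries. Then A = UVᵀ minimizes ‖M − NAᵀ‖_F² over all A ∈ ℝ^{p×k} satisfying AᵀA = I_k. -/

import Mathlib

open Matrix

lemma frob_eq {m q : ℕ} (X : Matrix (Fin m) (Fin q) ℝ) :
    ∑ i, ∑ j, (X i j) ^ 2 = (Xᵀ * X).trace := by
  simp only [trace, diag, mul_apply, transpose_apply, sq]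
  rw [Finset.sum_comm]

lemma col_sq {m q : ℕ} (X : Matrix (Fin m) (Fin q) ℝ) (i : Fin q) :
    (Xᵀ * X) i i = ∑ j, (X j i) ^ 2 := by
  simp [mul_apply, sq]

/-- reduced rank Procrustes rotation: if MᵀN = U D Vᵀ (thin SVD),
then A = U Vᵀ minimizes ‖M − NAᵀ‖_F² over {A : AᵀA = I}. -/
theorem stmt1 (n p k : ℕ) (M : Matrix (Fin n) (Fin p) ℝ) (N : Matrix (Fin n) (Fin k) ℝ)
    (U : Matrix (Fin p) (Fin k) ℝ) (V : Matrix (Fin k) (Fin k) ℝ) (d : Fin k → ℝ)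
    (hU : Uᵀ * U = 1) (hV : Vᵀ * V = 1) (hd : ∀ i, 0 ≤ d i)
    (hSVD : Mᵀ * N = U * Matrix.diagonal d * Vᵀ) :
    ∀ A : Matrix (Fin p) (Fin k) ℝ, Aᵀ * A = 1 →
      (∑ i, ∑ j, (M i j - (N * (U * Vᵀ)ᵀ) i j) ^ 2)
        ≤ ∑ i, ∑ j, (M i j - (N * Aᵀ) i j) ^ 2 := by
  intro A hA
  have key : ∀ B : Matrix (Fin p) (Fin k) ℝ, Bᵀ * B = 1 →
      ∑ i, ∑ j, (M i j - (N * Bᵀ) i j) ^ 2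
        = (Mᵀ * M).trace + (Nᵀ * N).trace - 2 * (Bᵀ * (Mᵀ * N)).trace := by
    intro B hB
    have h1 : ∑ i, ∑ j, (M i j - (N * Bᵀ) i j) ^ 2
        = ((M - N * Bᵀ)ᵀ * (M - N * Bᵀ)).trace := by
      rw [← frob_eq]; simp [Matrix.sub_apply]
    rw [h1]
    have hexp : (M - N * Bᵀ)ᵀ * (M - N * Bᵀ)
        = Mᵀ * M - Mᵀ * (N * Bᵀ) - B * Nᵀ * M + B * (Nᵀ * N) * Bᵀ := by
      rw [transpose_sub, transpose_mul, transpose_transpose,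
        Matrix.sub_mul, Matrix.mul_sub, Matrix.mul_sub]
      simp only [Matrix.mul_assoc]
      abel
    rw [hexp]
    have hc1 : (B * (Nᵀ * N) * Bᵀ).trace = (Nᵀ * N).trace := by
      rw [trace_mul_cycle, ← Matrix.mul_assoc, hB, Matrix.one_mul]
    have hc2 : (B * Nᵀ * M).trace = (Bᵀ * (Mᵀ * N)).trace := by
      rw [← trace_transpose (B * Nᵀ * M)]
      simp only [transpose_mul, transpose_transpose]
      rw [← Matrix.mul_assoc, trace_mul_cycle, Matrix.mul_assoc]
    have hc3 : (Mᵀ * (N * Bᵀ)).trace = (Bᵀ * (Mᵀ * N)).trace := by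
      rw [← Matrix.mul_assoc, trace_mul_cycle, Matrix.mul_assoc]
    rw [trace_add, trace_sub, trace_sub, hc1, hc2, hc3]
    ring
  have hUV : (U * Vᵀ)ᵀ * (U * Vᵀ) = 1 := by
    have hVV : V * Vᵀ = 1 := mul_eq_one_comm.mp hV
    simp only [transpose_mul, transpose_transpose]
    calc V * Uᵀ * (U * Vᵀ) = V * (Uᵀ * U) * Vᵀ := by simp only [Matrix.mul_assoc]
    _ = 1 := by rw [hU, Matrix.mul_one, hVV]
  rw [key A hA, key (U * Vᵀ) hUV]
  have hGoal : (Aᵀ * (Mᵀ * N)).trace ≤ ((U * Vᵀ)ᵀ * (Mᵀ * N)).trace := by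
    have hmax : ((U * Vᵀ)ᵀ * (Mᵀ * N)).trace = ∑ i, d i := by
      rw [hSVD]
      have he : (U * Vᵀ)ᵀ * (U * Matrix.diagonal d * Vᵀ)
          = V * Matrix.diagonal d * Vᵀ := by
        simp only [transpose_mul, transpose_transpose]
        calc V * Uᵀ * (U * Matrix.diagonal d * Vᵀ)
            = V * (Uᵀ * U) * (Matrix.diagonal d * Vᵀ) := by simp only [Matrix.mul_assoc]
          _ = V * Matrix.diagonal d * Vᵀ := by
              rw [hU, Matrix.mul_one, ← Matrix.mul_assoc]
      rw [he, trace_mul_cycle, hV, Matrix.one_mul, trace_diagonal]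
    rw [hmax, hSVD]
    set B : Matrix (Fin k) (Fin k) ℝ := Vᵀ * (Aᵀ * U) with hBdef
    have htr : (Aᵀ * (U * Matrix.diagonal d * Vᵀ)).trace = ∑ i, B i i * d i := by
      have e1 : Aᵀ * (U * Matrix.diagonal d * Vᵀ)
          = (Aᵀ * U) * Matrix.diagonal d * Vᵀ := by simp only [Matrix.mul_assoc]
      rw [e1, trace_mul_cycle]
      rw [show Vᵀ * (Aᵀ * U) * Matrix.diagonal d = B * Matrix.diagonal d from rfl]
      simp [Matrix.trace, Matrix.diag, mul_diagonal]
    rw [htr]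
    apply Finset.sum_le_sum
    intro i _
    have hBi : B i i ≤ 1 := by
      set C := Aᵀ * U with hC
      have hBii : B i i = ∑ j, V j i * C j i := by
        simp [hBdef, mul_apply]
      have hVcol : ∑ j, (V j i) ^ 2 = 1 := by
        have h := congrFun (congrFun hV i) i
        rw [← col_sq V i, h, one_apply_eq]
      have hCcol : ∑ j, (C j i) ^ 2 ≤ 1 := by
        have hsum : ∑ j, (C j i) ^ 2 = (Cᵀ * C) i i := (col_sq C i).symm
        have hQ : Cᵀ * C = Uᵀ * (A * Aᵀ) * U := by
          rw [hC]; simp only [transpose_mul, transpose_transpose, Matrix.mul_assoc]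
        set Q : Matrix (Fin p) (Fin p) ℝ := 1 - A * Aᵀ with hQdef
        have hQsym : Qᵀ = Q := by simp [hQdef, transpose_sub, transpose_mul]
        have hQidem : Q * Q = Q := by
          simp only [hQdef, Matrix.sub_mul, Matrix.mul_sub, Matrix.one_mul, Matrix.mul_one]
          have h2 : A * Aᵀ * (A * Aᵀ) = A * Aᵀ := by
            calc A * Aᵀ * (A * Aᵀ) = A * (Aᵀ * A) * Aᵀ := by simp only [Matrix.mul_assoc]
              _ = A * Aᵀ := by rw [hA, Matrix.mul_one]
          rw [h2]; abel
        have hpos : 0 ≤ ((Q * U)ᵀ * (Q * U)) i i := by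
          rw [col_sq]
          exact Finset.sum_nonneg fun j _ => sq_nonneg _
        have heq : (Q * U)ᵀ * (Q * U) = 1 - Uᵀ * (A * Aᵀ) * U := by
          rw [transpose_mul, hQsym]
          calc Uᵀ * Q * (Q * U) = Uᵀ * (Q * Q) * U := by simp only [Matrix.mul_assoc]
            _ = Uᵀ * Q * U := by rw [hQidem]
            _ = Uᵀ * U - Uᵀ * (A * Aᵀ) * U := by
                rw [hQdef, Matrix.mul_sub, Matrix.mul_one, Matrix.sub_mul]
            _ = 1 - Uᵀ * (A * Aᵀ) * U := by rw [hU]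
        rw [heq] at hpos
        have h3 : (Uᵀ * (A * Aᵀ) * U) i i ≤ 1 := by
          simpa [Matrix.sub_apply] using hpos
        rw [hsum, hQ]; exact h3
      have hcs := Finset.sum_mul_sq_le_sq_mul_sq Finset.univ (fun j => V j i) (fun j => C j i)
      rw [← hBii] at hcs
      nlinarith [hcs, hVcol, hCcol, sq_nonneg (B i i)]
    have := hd i
    nlinarith
  nlinarith [hGoal]
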